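/- arXiv:1801.06199 — 4 statements merged into one kernel-verified Lean document; each statement's English description precedes it below -/
import Mathlib

section
/- Let H be a real Hilbert space and A : H → H a continuously invertible bounded linear operator. Then for any vectors e₁, …, eₙ ∈ H, the Gram determinant satisfies G(Ae₁, …, Aeₙ) ≥ ‖A⁻¹‖^(−2n) · G(e₁, …, eₙ). -/
open Matrix
open scoped RealInnerProductSpace

lemma aux_det_nonneg {m : Type*} [Fintype m] [DecidableEq m] {M : Matrix m m ℝ}
    (hM : M.PosSemidef) : 0 ≤ M.det := by
  rw [hM.1.det_eq_prod_eigenvalues]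
  exact Finset.prod_nonneg fun i _ => by simpa using hM.eigenvalues_nonneg i

lemma aux_one_le_det {m : Type*} [Fintype m] [DecidableEq m] {M : Matrix m m ℝ}
    (hM : M.IsHermitian) (h : ∀ x : m → ℝ, x ⬝ᵥ x ≤ x ⬝ᵥ (M *ᵥ x)) : 1 ≤ M.det := by
  rw [hM.det_eq_prod_eigenvalues]
  have key : ∀ i, (1:ℝ) ≤ hM.eigenvalues i := by
    intro i
    set v : m → ℝ := ⇑(hM.eigenvectorBasis i) with hv
    have hvv : v ⬝ᵥ v = 1 := by
      have h1 : ‖hM.eigenvectorBasis i‖ = 1 := hM.eigenvectorBasis.orthonormal.1 i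
      have h2 : v ⬝ᵥ v = ⟪hM.eigenvectorBasis i, hM.eigenvectorBasis i⟫ := by
        simp only [dotProduct, PiLp.inner_apply, hv, RCLike.inner_apply, conj_trivial]
      rw [h2, real_inner_self_eq_norm_sq, h1]; norm_num
    have hmv : M *ᵥ v = hM.eigenvalues i • v := hM.mulVec_eigenvectorBasis i
    have := h v
    rw [hmv, dotProduct_smul, hvv, smul_eq_mul, mul_one] at this
    simpa using this
  calc (1:ℝ) = ∏ _i : m, 1 := by simp
  _ ≤ ∏ i, hM.eigenvalues i :=
    Finset.prod_le_prod (fun i _ => zero_le_one) (fun i _ => key i)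

open scoped MatrixOrder in
lemma aux_det_mono {m : Type*} [Fintype m] [DecidableEq m] {P Q : Matrix m m ℝ}
    (hP : P.PosSemidef) (hQ : Q.PosSemidef)
    (h : ∀ x : m → ℝ, x ⬝ᵥ (P *ᵥ x) ≤ x ⬝ᵥ (Q *ᵥ x)) : P.det ≤ Q.det := by
  by_cases hdet : P.det = 0
  · rw [hdet]; exact aux_det_nonneg hQ
  · set S := CFC.sqrt P with hSdef
    have hSherm : S.IsHermitian := (CFC.sqrt_nonneg P).posSemidef.1
    have hSS : S * S = P := CFC.sqrt_mul_sqrt_self P hP.nonneg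
    have hSdet : S.det ≠ 0 := by
      intro h0
      apply hdet
      rw [← hSS, det_mul, h0, mul_zero]
    have hSunit : IsUnit S.det := isUnit_iff_ne_zero.mpr hSdet
    set T := S⁻¹ with hTdef
    have hTherm : T.IsHermitian := hSherm.inv
    have hST : S * T = 1 := mul_nonsing_inv S hSunit
    have hTS : T * S = 1 := nonsing_inv_mul S hSunit
    set M := T * Q * T with hMdef
    have hMherm : M.IsHermitian := by
      have : Mᴴ = Tᴴ * Qᴴ * Tᴴ := by
        rw [hMdef, conjTranspose_mul, conjTranspose_mul, hTherm.eq, hQ.1.eq, mul_assoc]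
      rw [IsHermitian, this, hTherm.eq, hQ.1.eq]
    have hct : ∀ (R : Matrix m m ℝ), Rᴴ = Rᵀ := fun R => by
      ext i j; simp [conjTranspose_apply]
    have hTt : Tᵀ = T := by rw [← hct, hTherm.eq]
    have hSt : Sᵀ = S := by rw [← hct, hSherm.eq]
    have key : ∀ x : m → ℝ, x ⬝ᵥ x ≤ x ⬝ᵥ (M *ᵥ x) := by
      intro x
      have hx : S *ᵥ (T *ᵥ x) = x := by rw [mulVec_mulVec, hST, one_mulVec]
      have e1 : x ⬝ᵥ (M *ᵥ x) = (T *ᵥ x) ⬝ᵥ (Q *ᵥ (T *ᵥ x)) := by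
        rw [hMdef, ← mulVec_mulVec, ← mulVec_mulVec, dotProduct_mulVec x T,
          ← mulVec_transpose, hTt]
      have e2 : (T *ᵥ x) ⬝ᵥ (P *ᵥ (T *ᵥ x)) = x ⬝ᵥ x := by
        rw [← hSS, ← mulVec_mulVec, hx, dotProduct_mulVec, ← mulVec_transpose, hSt, hx]
      rw [e1, ← e2]
      exact h (T *ᵥ x)
    have hdetM : 1 ≤ M.det := aux_one_le_det hMherm key
    have hPpos : 0 < P.det := lt_of_le_of_ne (aux_det_nonneg hP) (Ne.symm hdet)
    have hMQ : M.det = Q.det / P.det := by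
      rw [hMdef, det_mul, det_mul, ← hSS, det_mul]
      have hTdet : T.det = S.det⁻¹ := by rw [hTdef, det_nonsing_inv, Ring.inverse_eq_inv']
      rw [hTdet]
      field_simp
    rw [hMQ, le_div_iff₀ hPpos, one_mul] at hdetM
    linarith

lemma aux_psd_smul {m : Type*} [Fintype m] {M : Matrix m m ℝ}
    (hM : M.PosSemidef) {c : ℝ} (hc : 0 ≤ c) : (c • M).PosSemidef := by
  refine .of_dotProduct_mulVec_nonneg ?_ fun x => ?_
  · rw [IsHermitian, conjTranspose_smul, hM.1.eq]; simp
  · rw [smul_mulVec, dotProduct_smul, smul_eq_mul]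
    exact mul_nonneg hc (hM.dotProduct_mulVec_nonneg x)

lemma gram_quadform {H : Type*} [NormedAddCommGroup H] [InnerProductSpace ℝ H]
    {n : ℕ} (e : Fin n → H) (x : Fin n → ℝ) :
    x ⬝ᵥ ((Matrix.of fun i j => ⟪e i, e j⟫) *ᵥ x) = ⟪∑ i, x i • e i, ∑ i, x i • e i⟫ := by
  rw [sum_inner]
  simp only [inner_sum, real_inner_smul_left, real_inner_smul_right,
    dotProduct, Matrix.mulVec, Matrix.of_apply, Finset.mul_sum]
  refine Finset.sum_congr rfl fun i _ => Finset.sum_congr rfl fun j _ => by ring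

lemma gram_psd {H : Type*} [NormedAddCommGroup H] [InnerProductSpace ℝ H]
    {n : ℕ} (e : Fin n → H) :
    (Matrix.of fun i j => ⟪e i, e j⟫ : Matrix (Fin n) (Fin n) ℝ).PosSemidef := by
  refine .of_dotProduct_mulVec_nonneg ?_ fun x => ?_
  · ext i j
    simp [conjTranspose_apply, real_inner_comm]
  · have hx : star x = x := by funext i; simp
    rw [hx, gram_quadform e x]
    exact real_inner_self_nonneg

/-- Gram determinant inequality for a continuously invertible bounded operator:
`G(Ae₁,…,Aeₙ) ≥ ‖A⁻¹‖^(−2n) · G(e₁,…,eₙ)`. -/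
theorem gram_det_ge_of_invertible {H : Type*} [NormedAddCommGroup H]
    [InnerProductSpace ℝ H] (A : H ≃L[ℝ] H) {n : ℕ} (e : Fin n → H) :
    Matrix.det (Matrix.of fun i j => ⟪A (e i), A (e j)⟫) ≥
      (‖(A.symm : H →L[ℝ] H)‖ ^ (2 * n))⁻¹ *
        Matrix.det (Matrix.of fun i j => ⟪e i, e j⟫) := by
  classical
  set C := ‖(A.symm : H →L[ℝ] H)‖ with hC
  set P := (Matrix.of fun i j => ⟪e i, e j⟫ : Matrix (Fin n) (Fin n) ℝ) with hP
  set Q := (Matrix.of fun i j => ⟪A (e i), A (e j)⟫ : Matrix (Fin n) (Fin n) ℝ) with hQ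
  have hQpsd : Q.PosSemidef := gram_psd (fun i => A (e i))
  have hPpsd : P.PosSemidef := gram_psd e
  have hmono : P.det ≤ ((C ^ 2) • Q).det := by
    refine aux_det_mono hPpsd (aux_psd_smul hQpsd (by positivity)) fun x => ?_
    rw [smul_mulVec, dotProduct_smul, smul_eq_mul]
    rw [hP, gram_quadform e x, hQ, gram_quadform (fun i => A (e i)) x]
    have hsum : ∑ i, x i • A (e i) = A (∑ i, x i • e i) := by
      rw [map_sum]
      exact Finset.sum_congr rfl fun i _ => (A.toContinuousLinearMap.map_smul _ _).symm
    set u := ∑ i, x i • e i with hu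
    rw [hsum, real_inner_self_eq_norm_sq, real_inner_self_eq_norm_sq]
    have h1 : ‖u‖ ≤ C * ‖A u‖ := by
      have := (A.symm : H →L[ℝ] H).le_opNorm (A u)
      simpa using this
    nlinarith [norm_nonneg u, norm_nonneg (A u), mul_nonneg (norm_nonneg (A.symm : H →L[ℝ] H)) (norm_nonneg (A u))]
  have hdet_smul : ((C ^ 2) • Q).det = C ^ (2 * n) * Q.det := by
    rw [Matrix.det_smul, ← pow_mul, Fintype.card_fin, mul_comm 2 n, mul_comm n 2]
  rw [hdet_smul] at hmono
  by_cases hc : C ^ (2 * n) = 0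
  · rw [hc, _root_.inv_zero, zero_mul]
    exact aux_det_nonneg hQpsd
  · have hcpos : 0 < C ^ (2 * n) :=
      lt_of_le_of_ne (pow_nonneg (norm_nonneg _) _) (Ne.symm hc)
    rw [ge_iff_le, inv_mul_eq_div, div_le_iff₀ hcpos]
    nlinarith
end

section
/- Let Δ₁, …, Δₙ be measurable subsets of [0,1] and set Δ₀ = ∅. Then the Gram determinant of the indicator functions in L²([0,1]) satisfies G(𝟙_{Δ₁}, …, 𝟙_{Δₙ}) ≥ ∏_{k=1}^{n} λ(Δ_k \ ⋃_{j=1}^{k−1} Δ_j), where λ is Lebesgue measure. -/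
open MeasureTheory

open Matrix


lemma aux_indicator_mul (A B : Set ℝ) (a b : ℝ) :
    (fun t => (a * A.indicator 1 t) * (b * B.indicator 1 t))
      = fun t => (a * b) * (A ∩ B).indicator 1 t := by
  funext t
  rw [Set.inter_indicator_one]
  simp only [Pi.mul_apply]
  ring

lemma aux_integrable {A B : Set ℝ} (hA : MeasurableSet A) (hB : MeasurableSet B)
    (hAf : volume A < ⊤) (a b : ℝ) :
    Integrable (fun t => (a * A.indicator 1 t) * (b * B.indicator 1 t)) := by
  rw [aux_indicator_mul]
  refine Integrable.const_mul ?_ _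
  refine (integrable_indicator_iff (hA.inter hB)).mpr ?_
  exact integrableOn_const (lt_of_le_of_lt (measure_mono Set.inter_subset_left) hAf).ne

lemma aux_integral (A B : Set ℝ) (hA : MeasurableSet A) (hB : MeasurableSet B) (a b : ℝ) :
    ∫ t, (a * A.indicator 1 t) * (b * B.indicator 1 t)
      = a * b * (volume (A ∩ B)).toReal := by
  rw [aux_indicator_mul, integral_const_mul, integral_indicator_one (hA.inter hB), measureReal_def]

lemma quad_expand {m : ℕ} (Δ : Fin m → Set ℝ) (c : Fin m → ℝ) :
    (fun t => (∑ i, c i * (Δ i).indicator 1 t)^2)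
      = fun t => ∑ i, ∑ j, (c i * (Δ i).indicator 1 t) * (c j * (Δ j).indicator 1 t) := by
  funext t
  rw [sq, Finset.sum_mul_sum]

lemma quad_eq {m : ℕ} (Δ : Fin m → Set ℝ) (hmeas : ∀ i, MeasurableSet (Δ i))
    (hfin : ∀ i, volume (Δ i) < ⊤) (c : Fin m → ℝ) :
    ∫ t, (∑ i, c i * (Δ i).indicator 1 t)^2
      = ∑ i, ∑ j, c i * c j * (volume (Δ i ∩ Δ j)).toReal := by
  rw [quad_expand]
  rw [integral_finset_sum _ (fun i _ =>
    integrable_finset_sum _ (fun j _ => aux_integrable (hmeas i) (hmeas j) (hfin i) _ _))]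
  refine Finset.sum_congr rfl fun i _ => ?_
  rw [integral_finset_sum _ (fun j _ => aux_integrable (hmeas i) (hmeas j) (hfin i) _ _)]
  exact Finset.sum_congr rfl fun j _ => aux_integral _ _ (hmeas i) (hmeas j) _ _

lemma dot_eq {m : ℕ} (Δ : Fin m → Set ℝ) (c : Fin m → ℝ) :
    c ⬝ᵥ ((Matrix.of fun i j => (volume (Δ i ∩ Δ j)).toReal) *ᵥ c)
      = ∑ i, ∑ j, c i * c j * (volume (Δ i ∩ Δ j)).toReal := by
  simp only [dotProduct, Matrix.mulVec, Matrix.of_apply, Finset.mul_sum]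
  exact Finset.sum_congr rfl fun i _ => Finset.sum_congr rfl fun j _ => by ring

lemma gram_psd_s2 {m : ℕ} (Δ : Fin m → Set ℝ) (hmeas : ∀ i, MeasurableSet (Δ i))
    (hfin : ∀ i, volume (Δ i) < ⊤) :
    (Matrix.of fun i j => (volume (Δ i ∩ Δ j)).toReal).PosSemidef := by
  refine Matrix.posSemidef_iff_dotProduct_mulVec.mpr ⟨?_, ?_⟩
  · ext i j
    simp only [Matrix.conjTranspose_apply, Matrix.of_apply, star_trivial, Set.inter_comm]
  · intro x
    rw [star_trivial, dot_eq, ← quad_eq Δ hmeas hfin]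
    exact integral_nonneg fun t => sq_nonneg _

lemma psd_det_nonneg {m : ℕ} {M : Matrix (Fin m) (Fin m) ℝ} (h : M.PosSemidef) :
    0 ≤ M.det := by
  rw [h.isHermitian.det_eq_prod_eigenvalues]
  exact Finset.prod_nonneg fun i _ => by simpa using h.eigenvalues_nonneg i

lemma biUnion_Iio_castSucc {n : ℕ} (Δ : Fin (n+1) → Set ℝ) (k : Fin n) :
    (⋃ j ∈ Finset.Iio (Fin.castSucc k), Δ j) = ⋃ j ∈ Finset.Iio k, Δ (Fin.castSucc j) := by
  ext t
  simp only [Set.mem_iUnion, Finset.mem_Iio, exists_prop]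
  constructor
  · rintro ⟨j, hj, ht⟩
    have h1 : (j : ℕ) < (k : ℕ) := by simpa [Fin.lt_def] using hj
    refine ⟨⟨j, h1.trans k.isLt⟩, h1, ?_⟩
    have : Fin.castSucc (⟨(j : ℕ), h1.trans k.isLt⟩ : Fin n) = j := Fin.ext rfl
    rwa [this]
  · rintro ⟨j, hj, ht⟩
    exact ⟨Fin.castSucc j, Fin.castSucc_lt_castSucc_iff.mpr hj, ht⟩

/-- Lower bound for the Gram determinant of indicator functions in `L²([0,1])`:
`G(𝟙_{Δ₁}, …, 𝟙_{Δₙ}) ≥ ∏ₖ λ(Δₖ \ ⋃_{j<k} Δⱼ)` (with `Δ₀ = ∅`). The Gram matrix entry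
`⟨𝟙_{Δᵢ}, 𝟙_{Δⱼ}⟩ = ∫₀¹ 𝟙_{Δᵢ}𝟙_{Δⱼ}` equals the Lebesgue measure of `Δᵢ ∩ Δⱼ`. -/
theorem gram_det_indicator_ge {n : ℕ} (Δ : Fin n → Set ℝ)
    (hmeas : ∀ i, MeasurableSet (Δ i)) (hsub : ∀ i, Δ i ⊆ Set.Icc 0 1) :
    Matrix.det (Matrix.of fun i j => (volume (Δ i ∩ Δ j)).toReal) ≥
      ∏ k : Fin n, (volume (Δ k \ ⋃ j ∈ Finset.Iio k, Δ j)).toReal := by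
  induction n with
  | zero => simp [Matrix.det_fin_zero]
  | succ n ih =>
    have hfin : ∀ i, volume (Δ i) < ⊤ := fun i =>
      lt_of_le_of_lt (measure_mono (hsub i)) measure_Icc_lt_top
    set E : Fin (n+1) → Set ℝ := fun k => Δ k \ ⋃ j ∈ Finset.Iio k, Δ j with hE
    have hgoal : (∏ k : Fin (n+1), (volume (Δ k \ ⋃ j ∈ Finset.Iio k, Δ j)).toReal)
        = ∏ k : Fin (n+1), (volume (E k)).toReal := rfl
    rw [ge_iff_le, hgoal]
    by_cases hdeg : ∃ k, (volume (E k)).toReal = 0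
    · obtain ⟨k, hk⟩ := hdeg
      rw [Finset.prod_eq_zero (Finset.mem_univ k) hk]
      exact psd_det_nonneg (gram_psd_s2 Δ hmeas hfin)
    · push_neg at hdeg
      have hEpos : ∀ k, 0 < (volume (E k)).toReal := fun k =>
        lt_of_le_of_ne ENNReal.toReal_nonneg (Ne.symm (hdeg k))
      set A₁ : Matrix (Fin n) (Fin n) ℝ :=
        Matrix.of fun i j => (volume (Δ i.castSucc ∩ Δ j.castSucc)).toReal with hA₁
      have hIH : (∏ k : Fin n,
          (volume (Δ k.castSucc \ ⋃ j ∈ Finset.Iio k, Δ j.castSucc)).toReal) ≤ A₁.det :=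
        ih (fun i => Δ i.castSucc) (fun i => hmeas _) (fun i => hsub _)
      have hprod_eq : (∏ k : Fin n,
          (volume (Δ k.castSucc \ ⋃ j ∈ Finset.Iio k, Δ j.castSucc)).toReal)
          = ∏ k : Fin n, (volume (E k.castSucc)).toReal := by
        refine Finset.prod_congr rfl fun k _ => ?_
        have : E k.castSucc = Δ k.castSucc \ ⋃ j ∈ Finset.Iio k, Δ j.castSucc := by
          rw [hE]
          simp only []
          rw [biUnion_Iio_castSucc]
        rw [this]
      have hdet1 : (∏ k : Fin n, (volume (E k.castSucc)).toReal) ≤ A₁.det := by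
        rw [← hprod_eq]; exact hIH
      have hpos1 : 0 < ∏ k : Fin n, (volume (E k.castSucc)).toReal :=
        Finset.prod_pos fun k _ => hEpos _
      have hdet1pos : 0 < A₁.det := lt_of_lt_of_le hpos1 hdet1
      haveI : Invertible A₁ := A₁.invertibleOfIsUnitDet (isUnit_iff_ne_zero.mpr hdet1pos.ne')
      set d : ℝ := (volume (Δ (Fin.last n) ∩ Δ (Fin.last n))).toReal with hd
      set b : Fin n → ℝ := fun j => (volume (Δ j.castSucc ∩ Δ (Fin.last n))).toReal with hb
      set B : Matrix (Fin n) (Fin 1) ℝ := Matrix.of fun i _ => b i with hB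
      set C : Matrix (Fin 1) (Fin n) ℝ := Matrix.of fun _ j => b j with hC
      set D : Matrix (Fin 1) (Fin 1) ℝ := Matrix.of fun _ _ => d with hD
      set M : Matrix (Fin (n+1)) (Fin (n+1)) ℝ :=
        Matrix.of fun i j => (volume (Δ i ∩ Δ j)).toReal with hM
      have hMsymm : ∀ i j, M i j = M j i := fun i j => by
        simp only [hM, Matrix.of_apply, Set.inter_comm]
      have hnat : ∀ i : Fin 1, (Fin.natAdd n i : Fin (n+1)) = Fin.last n := fun i => by
        ext; simp [Fin.eq_zero i]
      have hcast : ∀ i : Fin n, Fin.castAdd 1 i = Fin.castSucc i := fun i => rfl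
      have hblock : M.det = (Matrix.fromBlocks A₁ B C D).det := by
        rw [← Matrix.det_submatrix_equiv_self finSumFinEquiv M]
        congr 1
        ext i j
        rcases i with i | i <;> rcases j with j | j <;>
          simp [Matrix.submatrix_apply, finSumFinEquiv_apply_left, finSumFinEquiv_apply_right,
            hnat, hcast, hM, hA₁, hB, hC, hD, hb, hd, Set.inter_comm]
      set y : Fin n → ℝ := A₁⁻¹ *ᵥ b with hy
      have hA1y : A₁ *ᵥ y = b := by
        rw [hy, Matrix.mulVec_mulVec,
          Matrix.mul_nonsing_inv _ (isUnit_iff_ne_zero.mpr hdet1pos.ne'), Matrix.one_mulVec]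
      have hschur : (D - C * A₁⁻¹ * B).det = d - b ⬝ᵥ y := by
        rw [Matrix.det_fin_one]
        simp only [Matrix.sub_apply, hD, Matrix.of_apply]
        congr 1
        rw [Matrix.mul_assoc, Matrix.mul_apply]
        refine Finset.sum_congr rfl fun j _ => ?_
        simp only [hC, Matrix.of_apply]
        congr 1
      set c : Fin (n+1) → ℝ := Fin.snoc (fun i => -(y i)) 1 with hc
      have hinner1 : ∀ i : Fin n, (M *ᵥ c) i.castSucc = 0 := by
        intro i
        have h1 : (M *ᵥ c) i.castSucc = (∑ j : Fin n, A₁ i j * (-(y j))) + b i := by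
          rw [Matrix.mulVec, dotProduct, Fin.sum_univ_castSucc]
          simp only [hc, Fin.snoc_castSucc, Fin.snoc_last, mul_one]
          rfl
        have h2 : (∑ j : Fin n, A₁ i j * (-(y j))) = -((A₁ *ᵥ y) i) := by
          rw [Matrix.mulVec, dotProduct, ← Finset.sum_neg_distrib]
          exact Finset.sum_congr rfl fun j _ => by ring
        rw [h1, h2, hA1y]; ring
      have hlast : (M *ᵥ c) (Fin.last n) = d - b ⬝ᵥ y := by
        rw [Matrix.mulVec, dotProduct, Fin.sum_univ_castSucc]
        simp only [hc, Fin.snoc_castSucc, Fin.snoc_last, mul_one]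
        have h1 : ∀ j : Fin n, M (Fin.last n) j.castSucc = b j := fun j => by
          rw [hMsymm]; rfl
        have h2 : M (Fin.last n) (Fin.last n) = d := rfl
        rw [h2]
        have h3 : (∑ j : Fin n, M (Fin.last n) j.castSucc * (-(y j))) = -(b ⬝ᵥ y) := by
          rw [dotProduct, ← Finset.sum_neg_distrib]
          exact Finset.sum_congr rfl fun j _ => by rw [h1]; ring
        rw [h3]; ring
      have hdot : c ⬝ᵥ (M *ᵥ c) = d - b ⬝ᵥ y := by
        rw [dotProduct, Fin.sum_univ_castSucc]
        have h0 : (∑ i : Fin n, c i.castSucc * (M *ᵥ c) i.castSucc) = 0 := by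
          refine Finset.sum_eq_zero fun i _ => ?_
          rw [hinner1]; ring
        rw [h0, hlast, zero_add]
        simp [hc, Fin.snoc_last]
      have hEm : MeasurableSet (E (Fin.last n)) :=
        (hmeas _).diff (Finset.measurableSet_biUnion _ fun j _ => hmeas j)
      have hkey : (volume (E (Fin.last n))).toReal ≤ d - b ⬝ᵥ y := by
        rw [← hdot, hM]
        rw [dot_eq Δ c, ← quad_eq Δ hmeas hfin c]
        rw [← measureReal_def, ← integral_indicator_one hEm]
        refine integral_mono ?_ ?_ ?_
        · refine (integrable_indicator_iff hEm).mpr (integrableOn_const (LT.lt.ne ?_))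
          exact lt_of_le_of_lt (measure_mono Set.diff_subset) (hfin _)
        · rw [quad_expand]
          exact integrable_finset_sum _ fun i _ =>
            integrable_finset_sum _ fun j _ => aux_integrable (hmeas i) (hmeas j) (hfin i) _ _
        · intro t
          show (E (Fin.last n)).indicator 1 t ≤ (∑ i, c i * (Δ i).indicator 1 t)^2
          by_cases ht : t ∈ E (Fin.last n)
          · rw [Set.indicator_of_mem ht, Pi.one_apply]
            have hft : (∑ i, c i * (Δ i).indicator 1 t) = 1 := by
              rw [Fin.sum_univ_castSucc]
              have h0 : ∀ i : Fin n, (Δ i.castSucc).indicator (1 : ℝ → ℝ) t = 0 := by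
                intro i
                refine Set.indicator_of_notMem (fun hti => ht.2 ?_) _
                exact Set.mem_iUnion₂.mpr
                  ⟨i.castSucc, Finset.mem_Iio.mpr (Fin.castSucc_lt_last i), hti⟩
              simp [hc, Fin.snoc_castSucc, Fin.snoc_last, h0, Set.indicator_of_mem ht.1]
            rw [hft]; norm_num
          · rw [Set.indicator_of_notMem ht]
            exact sq_nonneg _
      calc ∏ k : Fin (n+1), (volume (E k)).toReal
          = (∏ k : Fin n, (volume (E (Fin.castSucc k))).toReal)
              * (volume (E (Fin.last n))).toReal := Fin.prod_univ_castSucc _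
        _ ≤ A₁.det * (D - C * A₁⁻¹ * B).det := by
            rw [hschur]
            exact mul_le_mul hdet1 hkey ENNReal.toReal_nonneg (le_of_lt hdet1pos)
        _ = M.det := by
            rw [hblock, Matrix.det_fromBlocks₁₁, Matrix.invOf_eq_nonsing_inv]
end

section
/- For every integer k ≥ 1 and real numbers 0 ≤ a < b, ∫_{Δ_k(a,b)} (∏_{i=1}^{k−1}(t_{i+1} − t_i))^{−1/2} dt₁⋯dt_k = π^{(k−1)/2} (b − a)^{(k+1)/2} / Γ((k+3)/2). -/
open MeasureTheory

open intervalIntegral Real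

lemma beta01 {p q : ℝ} (hp : 0 < p) (hq : 0 < q) :
    ∫ x in (0:ℝ)..1, x ^ (p-1) * (1-x) ^ (q-1) =
      Real.Gamma p * Real.Gamma q / Real.Gamma (p + q) := by
  have key : Complex.betaIntegral p q =
      Complex.ofReal (∫ x in (0:ℝ)..1, x ^ (p-1) * (1-x) ^ (q-1)) := by
    rw [← intervalIntegral.integral_ofReal]
    refine intervalIntegral.integral_congr fun x hx => ?_
    rw [Set.uIcc_of_le (by norm_num : (0:ℝ) ≤ 1)] at hx
    obtain ⟨hx0, hx1⟩ := hx
    have e1 : ((p:ℂ) - 1) = ((p - 1 : ℝ) : ℂ) := by push_cast; ring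
    have e2 : ((q:ℂ) - 1) = ((q - 1 : ℝ) : ℂ) := by push_cast; ring
    have e3 : (1 - (x:ℂ)) = ((1 - x : ℝ) : ℂ) := by push_cast; ring
    rw [e1, e2, e3, ← Complex.ofReal_cpow hx0, ← Complex.ofReal_cpow (by linarith)]
    push_cast
    ring
  have h := Complex.Gamma_mul_Gamma_eq_betaIntegral
    (s := (p:ℂ)) (t := (q:ℂ)) (by simpa using hp) (by simpa using hq)
  rw [key] at h
  have e4 : ((p:ℂ) + q) = ((p + q : ℝ) : ℂ) := by push_cast; ring
  rw [e4, Complex.Gamma_ofReal, Complex.Gamma_ofReal, Complex.Gamma_ofReal,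
    ← Complex.ofReal_mul, ← Complex.ofReal_mul] at h
  have h' := Complex.ofReal_injective h
  have hpq : Real.Gamma (p + q) ≠ 0 := (Real.Gamma_pos_of_pos (by linarith)).ne'
  field_simp
  linarith [h']

lemma cont_rpow_sub {b q : ℝ} (hq : 1 ≤ q) :
    Continuous fun x : ℝ => (b - x) ^ (q - 1) := by
  rcases eq_or_lt_of_le hq with h1 | h1
  · simp only [← h1, sub_self, Real.rpow_zero]; exact continuous_const
  · have hc : ∀ x : ℝ, ContinuousAt (fun y : ℝ => y ^ (q-1)) x := fun x =>
      Real.continuousAt_rpow_const x _ (Or.inr (by linarith))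
    exact (continuous_iff_continuousAt.2 hc).comp (continuous_const.sub continuous_id)

lemma beta_intble {a b p q : ℝ} (hp : -1 < p) (hq : 1 ≤ q) :
    IntervalIntegrable (fun x => (x - a) ^ p * (b - x) ^ (q-1)) volume a b := by
  have h1 : IntervalIntegrable (fun x : ℝ => (x - a) ^ p) volume a b := by
    have := (intervalIntegrable_rpow' (a := 0) (b := b - a) hp).comp_sub_right a
    simpa using this
  exact h1.mul_continuousOn (cont_rpow_sub hq).continuousOn

lemma beta_shift {a b p q : ℝ} (hab : a < b) (hp : 0 < p) (hq : 1 ≤ q) :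
    ∫ x in a..b, (x - a) ^ (p-1) * (b - x) ^ (q-1)
      = Real.Gamma p * Real.Gamma q / Real.Gamma (p+q) * (b-a) ^ (p+q-1) := by
  set c := b - a with hc
  have hc0 : 0 < c := by simp [hc]; linarith
  have h1 : (∫ x in a..b, (x - a) ^ (p-1) * (b - x) ^ (q-1))
      = ∫ u in (0:ℝ)..c, u ^ (p-1) * (c - u) ^ (q-1) := by
    have e0 : (∫ x in a..b, (x - a) ^ (p-1) * (b - x) ^ (q-1))
        = ∫ x in a..b, (fun u => u ^ (p-1) * (c - u) ^ (q-1)) (x - a) :=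
      intervalIntegral.integral_congr fun x _ => by
        simp only []
        rw [show c - (x - a) = b - x from by rw [hc]; ring]
    rw [e0, intervalIntegral.integral_comp_sub_right (fun u => u ^ (p-1) * (c-u) ^ (q-1)) a,
      sub_self]
  have h2 : (∫ u in (0:ℝ)..c, u ^ (p-1) * (c - u) ^ (q-1))
      = c • ∫ v in (0:ℝ)..1, (c*v) ^ (p-1) * (c - c*v) ^ (q-1) := by
    rw [intervalIntegral.smul_integral_comp_mul_left (fun u => u ^ (p-1) * (c-u) ^ (q-1)) c]
    norm_num
  have h3 : (∫ v in (0:ℝ)..1, (c*v) ^ (p-1) * (c - c*v) ^ (q-1))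
      = c ^ (p-1) * c ^ (q-1) * ∫ v in (0:ℝ)..1, v ^ (p-1) * (1-v) ^ (q-1) := by
    rw [← intervalIntegral.integral_const_mul]
    refine intervalIntegral.integral_congr fun v hv => ?_
    rw [Set.uIcc_of_le (by norm_num : (0:ℝ) ≤ 1)] at hv
    obtain ⟨hv0, hv1⟩ := hv
    have e1 : c - c * v = c * (1 - v) := by ring
    rw [e1, Real.mul_rpow hc0.le hv0, Real.mul_rpow hc0.le (by linarith)]
    ring
  rw [h1, h2, h3, beta01 hp (by linarith)]
  rw [smul_eq_mul]
  rw [show p + q - 1 = (p - 1) + (q - 1) + 1 by ring,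
    Real.rpow_add hc0, Real.rpow_add hc0, Real.rpow_one]
  ring

def SX (m : ℕ) (a b : ℝ) : Set (Fin m → ℝ) :=
  {t | Monotone t ∧ ∀ i, t i ∈ Set.Icc a b}

lemma measurableSet_SX (m : ℕ) (a b : ℝ) : MeasurableSet (SX m a b) := by
  have hrw : SX m a b =
      (⋂ (i) (j) (_ : i ≤ j), {t : Fin m → ℝ | t i ≤ t j}) ∩
        ⋂ i, (fun t : Fin m → ℝ => t i) ⁻¹' Set.Icc a b := by
    ext t
    simp only [SX, Set.mem_setOf_eq, Set.mem_inter_iff, Set.mem_iInter, Set.mem_preimage]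
    exact ⟨fun ⟨h1, h2⟩ => ⟨fun i j hij => h1 hij, h2⟩, fun ⟨h1, h2⟩ => ⟨fun i j hij => h1 i j hij, h2⟩⟩
  rw [hrw]
  exact (MeasurableSet.iInter fun i => MeasurableSet.iInter fun j =>
      MeasurableSet.iInter fun _ =>
        measurableSet_le (measurable_pi_apply i) (measurable_pi_apply j)).inter
    (MeasurableSet.iInter fun i => (measurable_pi_apply i) measurableSet_Icc)

lemma cons_mem_SX {m : ℕ} {a b x : ℝ} {y : Fin m → ℝ} :
    (Fin.cons x y : Fin (m+1) → ℝ) ∈ SX (m+1) a b ↔ x ∈ Set.Icc a b ∧ y ∈ SX m x b := by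
  constructor
  · rintro ⟨hmono, hmem⟩
    refine ⟨hmem 0, fun i j hij => ?_, fun i => ?_⟩
    · have := hmono (Fin.succ_le_succ_iff.mpr hij)
      simpa using this
    · refine ⟨?_, (hmem i.succ).2⟩
      have := hmono (Fin.zero_le i.succ)
      simpa using this
  · rintro ⟨hx, hmono, hmem⟩
    constructor
    · rw [Fin.monotone_iff_le_succ]
      rintro ⟨iv, hiv⟩
      rw [Fin.cons_succ]
      cases iv with
      | zero =>
          rw [show Fin.castSucc (⟨0, hiv⟩ : Fin m) = 0 from rfl, Fin.cons_zero]
          exact (hmem _).1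
      | succ k =>
          rw [show Fin.castSucc (⟨k+1, hiv⟩ : Fin m)
              = Fin.succ ⟨k, Nat.lt_of_succ_lt hiv⟩ from rfl, Fin.cons_succ]
          exact hmono (by simp [Fin.mk_le_mk])
    · intro i
      induction i using Fin.cases with
      | zero => simpa using hx
      | succ j => exact ⟨le_trans hx.1 (hmem j).1, (hmem j).2⟩

lemma SX_zero (a b : ℝ) : SX 0 a b = Set.univ := by
  ext t
  simp only [SX, Set.mem_setOf_eq, Set.mem_univ, iff_true]
  exact ⟨Subsingleton.monotone t, fun i => i.elim0⟩

lemma split_SX {m : ℕ} {a b : ℝ} (f : (Fin (m+1) → ℝ) → ENNReal) (hf : Measurable f) :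
    ∫⁻ t in SX (m+1) a b, f t
      = ∫⁻ x in Set.Icc a b, ∫⁻ y in SX m x b, f (Fin.cons x y) := by
  rw [← lintegral_indicator (measurableSet_SX _ a b)]
  have hmp := (measurePreserving_piFinSuccAbove (fun _ : Fin (m+1) => (volume : Measure ℝ)) 0).symm
  rw [show (volume : Measure (Fin (m+1) → ℝ)) = Measure.pi fun _ => volume from rfl]
  rw [← hmp.lintegral_comp (hf.indicator (measurableSet_SX _ a b))]
  have hmeas : Measurable fun p : ℝ × (Fin m → ℝ) =>
      ((SX (m+1) a b).indicator f) ((MeasurableEquiv.piFinSuccAbove (fun _ => ℝ) 0).symm p) :=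
    (hf.indicator (measurableSet_SX _ a b)).comp (MeasurableEquiv.measurable _)
  rw [MeasureTheory.lintegral_prod _ hmeas.aemeasurable]
  rw [← lintegral_indicator measurableSet_Icc]
  congr 1
  ext x
  have hx_eq : ∀ y : Fin m → ℝ,
      (MeasurableEquiv.piFinSuccAbove (fun _ => ℝ) 0).symm (x, y) = Fin.cons x y := by
    intro y
    simp [MeasurableEquiv.piFinSuccAbove_symm_apply, Fin.insertNthEquiv, Fin.insertNth_zero]
  simp_rw [hx_eq]
  by_cases hx : x ∈ Set.Icc a b
  · rw [Set.indicator_of_mem hx, ← lintegral_indicator (measurableSet_SX m x b)]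
    congr 1
    ext y
    by_cases hy : y ∈ SX m x b
    · rw [Set.indicator_of_mem hy, Set.indicator_of_mem (cons_mem_SX.mpr ⟨hx, hy⟩)]
    · rw [Set.indicator_of_notMem hy,
        Set.indicator_of_notMem (fun h => hy (cons_mem_SX.mp h).2)]
  · rw [Set.indicator_of_notMem hx]
    have hz : ∀ y : Fin m → ℝ, (SX (m+1) a b).indicator f (Fin.cons x y) = 0 := fun y =>
      Set.indicator_of_notMem (fun h => hx (cons_mem_SX.mp h).1) f
    simp_rw [hz, lintegral_zero]

noncomputable def Wfn (n : ℕ) (a : ℝ) (t : Fin (n+1) → ℝ) : ℝ :=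
  (Real.sqrt ((t 0 - a) * ∏ i : Fin n, (t i.succ - t i.castSucc)))⁻¹

lemma measurable_W (n : ℕ) (a : ℝ) :
    Measurable fun t : Fin (n+1) → ℝ => ENNReal.ofReal (Wfn n a t) := by
  apply ENNReal.measurable_ofReal.comp
  apply Measurable.inv
  apply Real.continuous_sqrt.measurable.comp
  exact ((measurable_pi_apply 0).sub measurable_const).mul
    (Finset.measurable_prod _ fun i _ =>
      (measurable_pi_apply _).sub (measurable_pi_apply _))

lemma prod_cons {n : ℕ} (x : ℝ) (y : Fin (n+1) → ℝ) :
    (∏ i : Fin (n+1), ((Fin.cons x y : Fin (n+2) → ℝ) i.succ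
        - (Fin.cons x y : Fin (n+2) → ℝ) i.castSucc))
      = (y 0 - x) * ∏ i : Fin n, (y i.succ - y i.castSucc) := by
  rw [Fin.prod_univ_succ]
  rw [Fin.cons_succ, Fin.castSucc_zero, Fin.cons_zero]
  refine congrArg _ (Finset.prod_congr rfl fun i _ => ?_)
  simp [← Fin.succ_castSucc]

lemma W_cons {n : ℕ} {a x : ℝ} (hax : a ≤ x) (y : Fin (n+1) → ℝ) :
    Wfn (n+1) a (Fin.cons x y) = (Real.sqrt (x - a))⁻¹ * Wfn n x y := by
  unfold Wfn
  rw [Fin.cons_zero, prod_cons, ← mul_assoc, show (x - a) * (y 0 - x) * ∏ i : Fin n,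
    (y i.succ - y i.castSucc) = (x - a) * ((y 0 - x) * ∏ i : Fin n, (y i.succ - y i.castSucc))
    from by ring, Real.sqrt_mul (by linarith), mul_inv]

lemma key1d {a b C E : ℝ} (hab : a < b) (hC : 0 ≤ C) (hE : 0 ≤ E) :
    ∫⁻ x in Set.Ioo a b, ENNReal.ofReal ((Real.sqrt (x - a))⁻¹ * (C * (b - x) ^ E))
      = ENNReal.ofReal
        (Real.Gamma (1/2) * Real.Gamma (E+1) / Real.Gamma (E + 3/2) * C * (b-a) ^ (E + 1/2)) := by
  have hcong : ∀ x ∈ Set.Ioo a b,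
      ENNReal.ofReal ((Real.sqrt (x - a))⁻¹ * (C * (b - x) ^ E))
        = ENNReal.ofReal (C * ((x - a) ^ ((1/2:ℝ) - 1) * (b - x) ^ ((E+1) - 1))) := by
    intro x hx
    congr 1
    have hxa : (0:ℝ) ≤ x - a := by linarith [hx.1]
    rw [Real.sqrt_eq_rpow, ← Real.rpow_neg hxa]
    rw [show ((1/2:ℝ) - 1) = -(1/(2:ℝ)) from by norm_num, show (E+1) - 1 = E from by ring]
    ring
  rw [setLIntegral_congr_fun measurableSet_Ioo hcong]
  have hint : IntegrableOn (fun x => C * ((x - a) ^ ((1/2:ℝ) - 1) * (b - x) ^ ((E+1) - 1)))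
      (Set.Ioo a b) volume := by
    have h1 : IntervalIntegrable (fun x => (x - a) ^ ((1/2:ℝ) - 1) * (b - x) ^ ((E+1) - 1))
        volume a b := beta_intble (by norm_num) (by linarith)
    have h2 := (h1.1.mono_set Set.Ioo_subset_Ioc_self)
    exact h2.const_mul C
  rw [← ofReal_integral_eq_lintegral_ofReal hint]
  · congr 1
    have h3 : ∫ x in Set.Ioo a b, C * ((x - a) ^ ((1/2:ℝ) - 1) * (b - x) ^ ((E+1) - 1))
        = C * ∫ x in a..b, (x - a) ^ ((1/2:ℝ) - 1) * (b - x) ^ ((E+1) - 1) := by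
      rw [intervalIntegral.integral_of_le (le_of_lt hab), ← integral_Ioc_eq_integral_Ioo,
        MeasureTheory.integral_const_mul]
    rw [h3, beta_shift hab (by norm_num) (by linarith)]
    rw [show (1/2:ℝ) + (E+1) - 1 = E + 1/2 from by ring,
      show (1/2:ℝ) + (E+1) = E + 3/2 from by ring]
    ring
  · refine (ae_restrict_iff' measurableSet_Ioo).mpr (Filter.Eventually.of_forall fun x hx => ?_)
    exact mul_nonneg hC (mul_nonneg (Real.rpow_nonneg (by linarith [hx.1]) _)
        (Real.rpow_nonneg (by linarith [hx.2]) _))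

lemma key1d' {a b C E : ℝ} (hab : a < b) (hC : 0 ≤ C) (hE : 0 ≤ E) :
    ∫⁻ x in Set.Ioo a b, ENNReal.ofReal (C * (b - x) ^ E)
      = ENNReal.ofReal (C * (b-a) ^ (E + 1) / (E + 1)) := by
  have hcont : Continuous fun x : ℝ => C * (b - x) ^ ((E+1) - 1) :=
    continuous_const.mul (cont_rpow_sub (by linarith))
  have hint : IntegrableOn (fun x => C * (b - x) ^ ((E+1) - 1)) (Set.Ioo a b) volume :=
    (hcont.integrableOn_Icc).mono_set Set.Ioo_subset_Icc_self
  rw [show (fun x : ℝ => ENNReal.ofReal (C * (b - x) ^ E))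
      = fun x : ℝ => ENNReal.ofReal (C * (b - x) ^ ((E+1) - 1)) from by
    funext x; rw [show E + 1 - 1 = E from by ring]]
  have hnn : 0 ≤ᵐ[volume.restrict (Set.Ioo a b)]
      fun x => C * (b - x) ^ ((E+1) - 1) :=
    (ae_restrict_iff' measurableSet_Ioo).mpr (Filter.Eventually.of_forall fun x hx =>
      mul_nonneg hC (Real.rpow_nonneg (by linarith [hx.2]) _))
  rw [← ofReal_integral_eq_lintegral_ofReal hint hnn]
  congr 1
  rw [← integral_Ioc_eq_integral_Ioo, ← intervalIntegral.integral_of_le hab.le,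
    intervalIntegral.integral_const_mul,
    intervalIntegral.integral_comp_sub_left (fun u : ℝ => u ^ ((E+1) - 1)) b,
    sub_self, integral_rpow (Or.inl (by linarith : (-1:ℝ) < E + 1 - 1)),
    show E + 1 - 1 + 1 = E + 1 from by ring,
    Real.zero_rpow (by linarith : E + 1 ≠ 0)]
  ring

lemma Hint_eq (n : ℕ) : ∀ a b : ℝ, a < b →
    ∫⁻ t in SX (n+1) a b, ENNReal.ofReal (Wfn n a t)
      = ENNReal.ofReal (Real.pi ^ (((n:ℝ)+1)/2) / Real.Gamma (((n:ℝ)+3)/2)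
          * (b-a) ^ (((n:ℝ)+1)/2)) := by
  induction n with
  | zero =>
      intro a b hab
      rw [split_SX _ (measurable_W 0 a)]
      have hinner : ∀ x : ℝ, (∫⁻ y in SX 0 x b, ENNReal.ofReal (Wfn 0 a (Fin.cons x y)))
          = ENNReal.ofReal ((Real.sqrt (x-a))⁻¹ * (1 * (b - x) ^ (0:ℝ))) := by
        intro x
        have hW : ∀ y : Fin 0 → ℝ, Wfn 0 a (Fin.cons x y) = (Real.sqrt (x-a))⁻¹ := by
          intro y; unfold Wfn; simp
        rw [SX_zero, Measure.restrict_univ]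
        simp_rw [hW]
        rw [lintegral_const]
        have huniv : (volume : Measure (Fin 0 → ℝ)) Set.univ = 1 := by
          rw [show (Set.univ : Set (Fin 0 → ℝ))
            = Set.pi Set.univ (fun _ => Set.univ) from by simp, volume_pi_pi]
          simp
        rw [huniv, mul_one]
        congr 1
        rw [Real.rpow_zero]
        ring
      simp_rw [hinner]
      rw [← Measure.restrict_congr_set (MeasureTheory.Ioo_ae_eq_Icc)]
      rw [key1d hab zero_le_one le_rfl]
      congr 1
      rw [Real.Gamma_one_half_eq, Real.sqrt_eq_rpow]
      norm_num
  | succ m ih =>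
      intro a b hab
      set C := Real.pi ^ (((m:ℝ)+1)/2) / Real.Gamma (((m:ℝ)+3)/2) with hCdef
      have hC : 0 ≤ C := div_nonneg (Real.rpow_nonneg Real.pi_pos.le _)
        (Real.Gamma_pos_of_pos (by positivity)).le
      have hE : (0:ℝ) ≤ ((m:ℝ)+1)/2 := by positivity
      rw [split_SX _ (measurable_W (m+1) a)]
      rw [← Measure.restrict_congr_set (MeasureTheory.Ioo_ae_eq_Icc)]
      have hinner : ∀ x ∈ Set.Ioo a b,
          (∫⁻ y in SX (m+1) x b, ENNReal.ofReal (Wfn (m+1) a (Fin.cons x y)))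
            = ENNReal.ofReal ((Real.sqrt (x-a))⁻¹ * (C * (b - x) ^ (((m:ℝ)+1)/2))) := by
        intro x hx
        have h1 : ∀ y : Fin (m+1) → ℝ, Wfn (m+1) a (Fin.cons x y)
            = (Real.sqrt (x-a))⁻¹ * Wfn m x y := fun y => W_cons (le_of_lt hx.1) y
        simp_rw [h1, ENNReal.ofReal_mul (inv_nonneg.mpr (Real.sqrt_nonneg _))]
        rw [lintegral_const_mul' _ _ ENNReal.ofReal_ne_top]
        rw [ih x b hx.2,
          ← ENNReal.ofReal_mul (inv_nonneg.mpr (Real.sqrt_nonneg _))]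
      rw [setLIntegral_congr_fun measurableSet_Ioo hinner]
      rw [key1d hab hC hE]
      congr 1
      have e1 : ((m:ℝ)+1)/2 + 1 = ((m:ℝ)+3)/2 := by ring
      have e2 : ((m:ℝ)+1)/2 + 3/2 = ((m:ℝ)+4)/2 := by ring
      have e3 : ((m:ℝ)+1)/2 + 1/2 = ((m:ℝ)+2)/2 := by ring
      rw [e1, e2, e3, hCdef, Real.Gamma_one_half_eq, Real.sqrt_eq_rpow]
      push_cast
      rw [show ((m:ℝ)+1+1)/2 = 1/2 + ((m:ℝ)+1)/2 from by ring, Real.rpow_add Real.pi_pos,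
        show ((m:ℝ)+1+3)/2 = ((m:ℝ)+4)/2 from by ring,
        show (1:ℝ)/2 + ((m:ℝ)+1)/2 = ((m:ℝ)+2)/2 from by ring]
      have hg3 : Real.Gamma (((m:ℝ)+3)/2) ≠ 0 := (Real.Gamma_pos_of_pos (by positivity)).ne'
      have hg4 : Real.Gamma (((m:ℝ)+4)/2) ≠ 0 := (Real.Gamma_pos_of_pos (by positivity)).ne'
      field_simp

lemma measurable_G (n : ℕ) :
    Measurable fun t : Fin (n+1) → ℝ =>
      (Real.sqrt (∏ i : Fin n, (t i.succ - t i.castSucc)))⁻¹ :=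
  (Real.continuous_sqrt.measurable.comp
    (Finset.measurable_prod Finset.univ fun i _ =>
      (measurable_pi_apply i.succ).sub (measurable_pi_apply i.castSucc))).inv

lemma main_lintegral (n : ℕ) (a b : ℝ) (hab : a < b) :
    ∫⁻ t in SX (n+1) a b,
        ENNReal.ofReal ((Real.sqrt (∏ i : Fin n, (t i.succ - t i.castSucc)))⁻¹)
      = ENNReal.ofReal (Real.pi ^ ((n:ℝ)/2) * (b-a) ^ (((n:ℝ)+2)/2)
          / Real.Gamma (((n:ℝ)+4)/2)) := by
  cases n with
  | zero =>
      have h1 : ∀ t : Fin 1 → ℝ,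
          ENNReal.ofReal ((Real.sqrt (∏ i : Fin 0, (t i.succ - t i.castSucc)))⁻¹) = 1 := by
        intro t; simp
      simp_rw [h1]
      rw [split_SX (fun _ => 1) measurable_const]
      have h2 : ∀ x : ℝ, (∫⁻ _ in SX 0 x b, (1:ENNReal)) = 1 := by
        intro x
        rw [SX_zero, Measure.restrict_univ, lintegral_one,
          show (Set.univ : Set (Fin 0 → ℝ))
            = Set.pi Set.univ (fun _ => Set.univ) from by simp, volume_pi_pi]
        simp
      simp_rw [h2]
      rw [lintegral_one, Measure.restrict_apply_univ, Real.volume_Icc]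
      congr 1
      rw [show ((0:ℕ):ℝ) = 0 from by norm_num]
      norm_num
  | succ m =>
      have hf : ∀ (x : ℝ) (y : Fin (m+1) → ℝ),
          ((Real.sqrt (∏ i : Fin (m+1), ((Fin.cons x y : Fin (m+2) → ℝ) i.succ
            - (Fin.cons x y : Fin (m+2) → ℝ) i.castSucc)))⁻¹) = Wfn m x y := by
        intro x y
        unfold Wfn
        rw [prod_cons]
      rw [split_SX _ ((measurable_G (m+1)).ennreal_ofReal)]
      rw [← Measure.restrict_congr_set (MeasureTheory.Ioo_ae_eq_Icc)]
      set C := Real.pi ^ (((m:ℝ)+1)/2) / Real.Gamma (((m:ℝ)+3)/2) with hCdef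
      have hC : 0 ≤ C := div_nonneg (Real.rpow_nonneg Real.pi_pos.le _)
        (Real.Gamma_pos_of_pos (by positivity)).le
      have hinner : ∀ x ∈ Set.Ioo a b,
          (∫⁻ y in SX (m+1) x b, ENNReal.ofReal
              ((Real.sqrt (∏ i : Fin (m+1), ((Fin.cons x y : Fin (m+2) → ℝ) i.succ
                - (Fin.cons x y : Fin (m+2) → ℝ) i.castSucc)))⁻¹))
            = ENNReal.ofReal (C * (b - x) ^ (((m:ℝ)+1)/2)) := by
        intro x hx
        simp_rw [hf x]
        rw [Hint_eq m x b hx.2]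
      rw [setLIntegral_congr_fun measurableSet_Ioo hinner]
      rw [key1d' hab hC (by positivity)]
      congr 1
      have hg3 : Real.Gamma (((m:ℝ)+3)/2) ≠ 0 := (Real.Gamma_pos_of_pos (by positivity)).ne'
      have hg5 : Real.Gamma (((m:ℝ)+3)/2 + 1) = (((m:ℝ)+3)/2) * Real.Gamma (((m:ℝ)+3)/2) :=
        Real.Gamma_add_one (by positivity)
      push_cast
      rw [show ((m:ℝ)+1)/2 + 1 = ((m:ℝ)+3)/2 from by ring,
        show ((m:ℝ)+1+4)/2 = ((m:ℝ)+3)/2 + 1 from by ring,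
        show ((m:ℝ)+1+2)/2 = ((m:ℝ)+3)/2 from by ring, hg5, hCdef]
      field_simp


/-- Simplex integral identity: for `k = n + 1 ≥ 1` and `0 ≤ a < b`,
`∫_{Δ_k(a,b)} (∏_{i=1}^{k−1}(t_{i+1} − t_i))^{−1/2} dt = π^{(k−1)/2}(b−a)^{(k+1)/2}/Γ((k+3)/2)`. -/
theorem simplex_integral_eq {n : ℕ} {a b : ℝ} (ha : 0 ≤ a) (hab : a < b) :
    (∫ t in {t : Fin (n + 1) → ℝ | Monotone t ∧ ∀ i, t i ∈ Set.Icc a b},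
        (Real.sqrt (∏ i : Fin n, (t i.succ - t i.castSucc)))⁻¹) =
      Real.pi ^ ((n : ℝ) / 2) * (b - a) ^ (((n : ℝ) + 2) / 2) /
        Real.Gamma (((n : ℝ) + 4) / 2) := by
  
  have hset : {t : Fin (n + 1) → ℝ | Monotone t ∧ ∀ i, t i ∈ Set.Icc a b} = SX (n+1) a b := rfl
  rw [hset]
  rw [MeasureTheory.integral_eq_lintegral_of_nonneg_ae
    (Filter.Eventually.of_forall fun t => inv_nonneg.mpr (Real.sqrt_nonneg _))
    (measurable_G n).aestronglyMeasurable]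
  rw [main_lintegral n a b hab]
  rw [ENNReal.toReal_ofReal]
  exact div_nonneg (mul_nonneg (Real.rpow_nonneg Real.pi_pos.le _)
    (Real.rpow_nonneg (by linarith) _)) (Real.Gamma_pos_of_pos (by positivity)).le
end

section
/- Let s₁ < ⋯ be the endpoints 0 = s₀ < s₁ < ⋯ < s_N < s_{N+1} = 1 of a partition of [0,1], and let P̃ be the orthogonal projection in L²([0,1]) onto span{𝟙_{[s₀,s₁]}, …, 𝟙_{[s_N,1]}}. Then for any t₁ ≤ ⋯ ≤ t_k in [0,1], G((I − P̃)𝟙_{[t₁,t₂]}, …, (I − P̃)𝟙_{[t_{k−1},t_k]}) = (∏_{j=0}^{N}(s_{j+1} − s_j))^{−1} · G(𝟙_{[t₁,t₂]}, …, 𝟙_{[t_{k−1},t_k]}, 𝟙_{[s₀,s₁]}, …, 𝟙_{[s_N,1]}). -/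
open MeasureTheory
open scoped RealInnerProductSpace

noncomputable abbrev L2unit : Type :=
  Lp ℝ 2 (volume.restrict (Set.Icc (0 : ℝ) 1))

/-- The indicator `𝟙_{[s,t]}` as an element of `L²([0,1])`. -/
noncomputable def ind (s t : ℝ) : L2unit :=
  indicatorConstLp 2 (measurableSet_Icc : MeasurableSet (Set.Icc s t))
    (by
      rw [Measure.restrict_apply measurableSet_Icc]
      exact ((measure_mono Set.inter_subset_right).trans_lt measure_Icc_lt_top).ne)
    (1 : ℝ)

section GramAux

open Matrix

variable {E : Type*} [NormedAddCommGroup E] [InnerProductSpace ℝ E]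

/-- Gram determinant identity: `G((I-P)v) * G(w) = G(v, w)` where `P` projects onto
the span of the `w`'s. -/
lemma gram_aux {n m : ℕ} (v : Fin n → E) (w : Fin m → E)
    (K : Submodule ℝ E) [CompleteSpace K]
    (hK : K = Submodule.span ℝ (Set.range w)) :
    Matrix.det (Matrix.of fun i j : Fin n =>
        ⟪v i - (Submodule.orthogonalProjectionOnto K (v i) : E), v j - (Submodule.orthogonalProjectionOnto K (v j) : E)⟫) *
      Matrix.det (Matrix.of fun i j : Fin m => ⟪w i, w j⟫) =
    Matrix.det (Matrix.of fun i j : Fin n ⊕ Fin m => ⟪Sum.elim v w i, Sum.elim v w j⟫) := by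
  set u : Fin n → E := fun i => v i - (Submodule.orthogonalProjectionOnto K (v i) : E) with hu_def
  have hu : ∀ i j, ⟪u i, w j⟫ = 0 := fun i j =>
    (Submodule.mem_orthogonal' K (u i)).mp (Submodule.sub_starProjection_mem_orthogonal (K := K) (v i))
      (w j) (hK ▸ Submodule.subset_span (Set.mem_range_self j))
  have hc : ∀ i, ∃ c : Fin m → ℝ, ∑ j, c j • w j = (Submodule.orthogonalProjectionOnto K (v i) : E) := by
    intro i
    exact (Submodule.mem_span_range_iff_exists_fun ℝ).mp
      (hK ▸ (Submodule.orthogonalProjectionOnto K (v i)).2)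
  choose c hc using hc
  set A : Matrix (Fin n ⊕ Fin m) (Fin n ⊕ Fin m) ℝ :=
    Matrix.fromBlocks 1 (Matrix.of fun i j => -(c i j)) 0 1 with hA
  set f : Fin n ⊕ Fin m → E := Sum.elim v w with hf
  set g : Fin n ⊕ Fin m → E := Sum.elim u w with hg_def
  have hg : ∀ k, g k = ∑ l, A k l • f l := by
    intro k
    rw [Fintype.sum_sum_type]
    cases k with
    | inl i =>
      simp only [hA, hg_def, hf, Matrix.fromBlocks_apply₁₁, Matrix.fromBlocks_apply₁₂,
        Matrix.one_apply, Matrix.of_apply, Sum.elim_inl, Sum.elim_inr, ite_smul, one_smul,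
        zero_smul, Finset.sum_ite_eq, Finset.mem_univ, if_true, neg_smul,
        Finset.sum_neg_distrib]
      rw [hc i]
      exact sub_eq_add_neg _ _
    | inr j =>
      simp only [hA, hg_def, hf, Matrix.fromBlocks_apply₂₁, Matrix.fromBlocks_apply₂₂,
        Matrix.one_apply, Matrix.of_apply, Sum.elim_inl, Sum.elim_inr, ite_smul, one_smul,
        zero_smul, Finset.sum_ite_eq, Finset.mem_univ, if_true, Matrix.zero_apply,
        Finset.sum_const_zero, zero_add]
  have hGram : (Matrix.of fun k l : Fin n ⊕ Fin m => ⟪g k, g l⟫) =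
      A * (Matrix.of fun k l : Fin n ⊕ Fin m => ⟪f k, f l⟫) * Aᵀ := by
    ext k l
    simp only [Matrix.mul_apply, Matrix.of_apply, Matrix.transpose_apply, hg]
    rw [sum_inner]
    simp only [inner_sum, real_inner_smul_left, real_inner_smul_right, Finset.mul_sum,
      Finset.sum_mul]
    rw [Finset.sum_comm]
    apply Finset.sum_congr rfl; intro x _; apply Finset.sum_congr rfl; intro y _; ring
  have hdetA : A.det = 1 := by
    rw [hA, Matrix.det_fromBlocks_zero₂₁]; simp
  have hblock : (Matrix.of fun k l : Fin n ⊕ Fin m => ⟪g k, g l⟫) =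
      Matrix.fromBlocks (Matrix.of fun i j : Fin n => ⟪u i, u j⟫) 0 0
        (Matrix.of fun i j : Fin m => ⟪w i, w j⟫) := by
    ext k l
    cases k with
    | inl i => cases l with
      | inl j => rfl
      | inr j => simpa [hg_def] using hu i j
    | inr i => cases l with
      | inl j =>
        simp only [hg_def, Matrix.of_apply, Sum.elim_inr, Sum.elim_inl,
          Matrix.fromBlocks_apply₂₁, Matrix.zero_apply]
        rw [real_inner_comm]; exact hu j i
      | inr j => rfl
  have : Matrix.det (Matrix.of fun k l : Fin n ⊕ Fin m => ⟪g k, g l⟫) =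
      Matrix.det (Matrix.of fun k l : Fin n ⊕ Fin m => ⟪f k, f l⟫) := by
    rw [hGram, Matrix.det_mul, Matrix.det_mul, Matrix.det_transpose, hdetA, one_mul, mul_one]
  rw [← this, hblock, Matrix.det_fromBlocks_zero₂₁]

end GramAux

/-- The inner product of two interval indicators in `L²([0,1])`. -/
lemma inner_ind (a b c d : ℝ) :
    ⟪ind a b, ind c d⟫ =
      (volume (Set.Icc a b ∩ Set.Icc c d ∩ Set.Icc (0:ℝ) 1)).toReal := by
  set μ := volume.restrict (Set.Icc (0:ℝ) 1) with hμ
  rw [ind, L2.inner_indicatorConstLp_one]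
  have h1 : (ind c d : ℝ → ℝ) =ᵐ[μ] (Set.Icc c d).indicator fun _ => (1:ℝ) :=
    indicatorConstLp_coeFn
  calc ∫ x in Set.Icc a b, (ind c d : ℝ → ℝ) x ∂μ
      = ∫ x in Set.Icc a b, (Set.Icc c d).indicator (fun _ => (1:ℝ)) x ∂μ :=
        integral_congr_ae (ae_restrict_of_ae h1)
    _ = ∫ x in Set.Icc a b ∩ Set.Icc c d, (1:ℝ) ∂μ := by
        rw [setIntegral_indicator measurableSet_Icc]
    _ = (μ (Set.Icc a b ∩ Set.Icc c d)).toReal := by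
        rw [setIntegral_const, smul_eq_mul, mul_one, measureReal_def]
    _ = (volume (Set.Icc a b ∩ Set.Icc c d ∩ Set.Icc (0:ℝ) 1)).toReal := by
        rw [hμ, Measure.restrict_apply (measurableSet_Icc.inter measurableSet_Icc)]

lemma inner_ind_zero {a b c d : ℝ} (h : b ≤ c) : ⟪ind a b, ind c d⟫ = 0 := by
  rw [inner_ind]
  have hz : volume (Set.Icc a b ∩ Set.Icc c d ∩ Set.Icc (0:ℝ) 1) = 0 := by
    refine measure_mono_null Set.inter_subset_left ?_
    rw [Set.Icc_inter_Icc, Real.volume_Icc]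
    exact ENNReal.ofReal_eq_zero.mpr
      (sub_nonpos.mpr ((min_le_left _ _).trans (h.trans (le_max_right _ _))))
  rw [hz, ENNReal.toReal_zero]

/-- For the projection `P̃` onto the span of indicators of a partition
`0 = s₀ < s₁ < ⋯ < s_N < s_{N+1} = 1` of `[0,1]` and `t₁ ≤ ⋯ ≤ t_k` in `[0,1]`:
`G((I−P̃)𝟙_{[t₁,t₂]},…,(I−P̃)𝟙_{[t_{k−1},t_k]})
  = (∏ⱼ(s_{j+1}−s_j))⁻¹ · G(𝟙_{[t₁,t₂]},…,𝟙_{[t_{k−1},t_k]},𝟙_{[s₀,s₁]},…,𝟙_{[s_N,1]})`. -/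
theorem gram_det_partition_projection {N : ℕ} (s : Fin (N + 2) → ℝ)
    (hs : StrictMono s) (hs0 : s 0 = 0) (hs1 : s (Fin.last (N + 1)) = 1)
    {n : ℕ} (t : Fin (n + 1) → ℝ) (ht : Monotone t)
    (hI : ∀ i, t i ∈ Set.Icc (0 : ℝ) 1)
    (K : Submodule ℝ L2unit) [CompleteSpace K]
    (hK : K = Submodule.span ℝ
      (Set.range fun j : Fin (N + 1) => ind (s j.castSucc) (s j.succ))) :
    Matrix.det (Matrix.of fun i j : Fin n =>
        ⟪ind (t i.castSucc) (t i.succ) -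
            (Submodule.orthogonalProjectionOnto K (ind (t i.castSucc) (t i.succ)) : L2unit),
          ind (t j.castSucc) (t j.succ) -
            (Submodule.orthogonalProjectionOnto K (ind (t j.castSucc) (t j.succ)) : L2unit)⟫) =
      (∏ j : Fin (N + 1), (s j.succ - s j.castSucc))⁻¹ *
        Matrix.det (Matrix.of fun i j : Fin n ⊕ Fin (N + 1) =>
          ⟪Sum.elim (fun i : Fin n => ind (t i.castSucc) (t i.succ))
              (fun j : Fin (N + 1) => ind (s j.castSucc) (s j.succ)) i,
            Sum.elim (fun i : Fin n => ind (t i.castSucc) (t i.succ))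
              (fun j : Fin (N + 1) => ind (s j.castSucc) (s j.succ)) j⟫) := by
  set v : Fin n → L2unit := fun i => ind (t i.castSucc) (t i.succ) with hv
  set w : Fin (N + 1) → L2unit := fun j => ind (s j.castSucc) (s j.succ) with hw
  have key := gram_aux v w K hK
  have hGw : (Matrix.of fun i j : Fin (N + 1) => ⟪w i, w j⟫) =
      Matrix.diagonal (fun j : Fin (N + 1) => s j.succ - s j.castSucc) := by
    ext i j
    rcases eq_or_ne i j with rfl | hij
    · simp only [Matrix.of_apply, Matrix.diagonal_apply_eq, hw]
      rw [inner_ind, Set.inter_self]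
      have hsub : Set.Icc (s i.castSucc) (s i.succ) ⊆ Set.Icc (0:ℝ) 1 :=
        Set.Icc_subset_Icc (hs0 ▸ hs.monotone (Fin.zero_le _))
          (hs1 ▸ hs.monotone (Fin.le_last _))
      rw [Set.inter_eq_left.mpr hsub, Real.volume_Icc,
        ENNReal.toReal_ofReal (sub_nonneg.mpr (hs (Fin.castSucc_lt_succ (i := i))).le)]
    · rw [Matrix.diagonal_apply_ne _ hij]
      simp only [Matrix.of_apply, hw]
      rcases hij.lt_or_gt with h | h
      · exact inner_ind_zero (hs.monotone (by
          simp only [Fin.le_def, Fin.val_succ, Fin.coe_castSucc]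
          exact h))
      · rw [real_inner_comm]
        exact inner_ind_zero (hs.monotone (by
          simp only [Fin.le_def, Fin.val_succ, Fin.coe_castSucc]
          exact h))
  have hpos : 0 < ∏ j : Fin (N + 1), (s j.succ - s j.castSucc) :=
    Finset.prod_pos fun j _ => sub_pos.mpr (hs (Fin.castSucc_lt_succ (i := j)))
  rw [hGw, Matrix.det_diagonal] at key
  rw [eq_inv_mul_iff_mul_eq₀ hpos.ne', mul_comm]
  exact key
end
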